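/- Let c, γ, b > 0 with b > a > 0 and set s := a/b ∈ (0,1). There exist constants C > 0 and δ_0 > 0 such that for all δ ∈ (0, δ_0), choosing N = N(δ) := ⌊ln(1/δ) / ln ln(1/δ)⌋, one has δ N^2 (2N)^{N+1} / (e b)^N + s^{N+1} ≤ C e^{-γ' N(δ)} where γ' := min(γ, ln(1/s)) > 0 and in fact one may take γ' = ln(b/a) provided γ ≥ ln(b/a). -/
import Mathlib


open Real

set_option maxHeartbeats 800000 in
theorem noisy_data_minimization (a b γ : ℝ) (ha : 0 < a) (hab : a < b) (hγ : 0 < γ) :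
    ∃ C > (0 : ℝ), ∃ δ₀ > (0 : ℝ),
      ∀ δ : ℝ, 0 < δ → δ < δ₀ →
        (let s : ℝ := a / b
         let N : ℕ := ⌊Real.log (1 / δ) / Real.log (Real.log (1 / δ))⌋₊
         δ * (N : ℝ) ^ 2 * (2 * (N : ℝ)) ^ (N + 1) / (Real.exp 1 * b) ^ N + s ^ (N + 1) ≤
            C * Real.exp (-(min γ (Real.log (b / a))) * N) ∧
          (Real.log (b / a) ≤ γ →
            δ * (N : ℝ) ^ 2 * (2 * (N : ℝ)) ^ (N + 1) / (Real.exp 1 * b) ^ N + s ^ (N + 1) ≤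
              C * Real.exp (-(Real.log (b / a)) * N))) := by
  have hb : 0 < b := ha.trans hab
  have hba : 1 < b / a := (one_lt_div ha).mpr hab
  have hlogba : 0 < Real.log (b / a) := Real.log_pos hba
  set γ' : ℝ := min γ (Real.log (b / a)) with hγ'def
  have hγ'pos : 0 < γ' := lt_min hγ hlogba
  have hγ'le : γ' ≤ Real.log (b / a) := min_le_right _ _
  set A : ℝ := max (Real.log 2 + γ' - 1 - Real.log b) 0 with hAdef
  have hA0 : 0 ≤ A := le_max_right _ _
  refine ⟨2, by norm_num, Real.exp (-(Real.exp (Real.exp (A + 13)))), Real.exp_pos _, ?_⟩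
  intro δ hδ hδ0
  dsimp only
  set L : ℝ := Real.log (1 / δ) with hLdef
  set N : ℕ := ⌊L / Real.log L⌋₊ with hNdef
  -- L is large
  have hL : Real.exp (Real.exp (A + 13)) < L := by
    rw [hLdef]
    rw [Real.lt_log_iff_exp_lt (by positivity), lt_div_iff₀ hδ]
    calc Real.exp (Real.exp (Real.exp (A + 13))) * δ
        < Real.exp (Real.exp (Real.exp (A + 13))) * Real.exp (-(Real.exp (Real.exp (A + 13)))) :=
          mul_lt_mul_of_pos_left hδ0 (Real.exp_pos _)
      _ = 1 := by rw [← Real.exp_add]; simp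
  have hLpos : 0 < L := (Real.exp_pos _).trans hL
  have hlogL : Real.exp (A + 13) ≤ Real.log L := by
    have := Real.log_lt_log (Real.exp_pos _) hL
    rw [Real.log_exp] at this
    exact this.le
  have hlogLpos : 0 < Real.log L := lt_of_lt_of_le (Real.exp_pos _) hlogL
  have hloglogL : A + 13 ≤ Real.log (Real.log L) := by
    calc A + 13 = Real.log (Real.exp (A + 13)) := (Real.log_exp _).symm
      _ ≤ Real.log (Real.log L) := Real.log_le_log (Real.exp_pos _) hlogL
  have hloglog_nonneg : 0 ≤ Real.log (Real.log L) := by linarith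
  have hlogL4 : 4 ≤ Real.log L := by
    have h1 : (14 : ℝ) ≤ Real.exp (A + 13) := by
      have := Real.add_one_le_exp (A + 13); linarith
    linarith
  -- (log L)^2 ≤ 4 L
  have hsqrt : Real.log L ≤ 2 * Real.sqrt L := by
    have h1 : Real.log (Real.sqrt L) ≤ Real.sqrt L - 1 :=
      Real.log_le_sub_one_of_pos (Real.sqrt_pos.mpr hLpos)
    have h2 : Real.log (Real.sqrt L) = Real.log L / 2 := Real.log_sqrt hLpos.le
    linarith
  have hsq : Real.log L * Real.log L ≤ 4 * L := by
    nlinarith [Real.sq_sqrt hLpos.le, Real.sqrt_nonneg L, hlogLpos]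
  set r : ℝ := L / Real.log L with hrdef
  have hrpos : 0 < r := div_pos hLpos hlogLpos
  have hlogL_le_4r : Real.log L ≤ 4 * r := by
    have h' : Real.log L ≤ 4 * L / Real.log L := (le_div_iff₀ hlogLpos).mpr (by nlinarith)
    rw [hrdef, ← mul_div_assoc]
    exact h' 
  have hr1 : 1 ≤ r := by linarith
  have hN1 : 1 ≤ N := Nat.le_floor (by exact_mod_cast hr1)
  have hNr : (N : ℝ) ≤ r := Nat.floor_le hrpos.le
  have hNpos : (0 : ℝ) < N := by exact_mod_cast hN1
  have hN1' : (1 : ℝ) ≤ N := by exact_mod_cast hN1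
  have hrlogL : r * Real.log L = L := div_mul_cancel₀ L (ne_of_gt hlogLpos)
  have hlogr : Real.log r = Real.log L - Real.log (Real.log L) :=
    Real.log_div (ne_of_gt hLpos) (ne_of_gt hlogLpos)
  have hlogr_nonneg : 0 ≤ Real.log r := by
    rw [hlogr]
    have := Real.log_le_self hlogLpos.le
    linarith
  have hlogN : Real.log N ≤ Real.log r := Real.log_le_log hNpos hNr
  have hlogN_nonneg : 0 ≤ Real.log N := Real.log_nonneg hN1'
  -- KEY estimate
  have key : (N : ℝ) * Real.log N + 3 * Real.log N + Real.log 2 + (N : ℝ) * A ≤ L := by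
    have h1 : (N : ℝ) * Real.log N ≤ r * Real.log r := by
      calc (N : ℝ) * Real.log N ≤ (N : ℝ) * Real.log r :=
            mul_le_mul_of_nonneg_left hlogN hNpos.le
        _ ≤ r * Real.log r := mul_le_mul_of_nonneg_right hNr hlogr_nonneg
    have h2 : r * Real.log r = L - r * Real.log (Real.log L) := by
      rw [hlogr, mul_sub, hrlogL]
    have h3 : Real.log N ≤ Real.log L := by
      rw [hlogr] at hlogN; linarith
    have h4 : Real.log 2 ≤ 1 := by
      have := Real.log_le_sub_one_of_pos (by norm_num : (0:ℝ) < 2); linarith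
    have h5 : (N : ℝ) * A ≤ r * A := mul_le_mul_of_nonneg_right hNr hA0
    have h6 : r * (A + 13) ≤ r * Real.log (Real.log L) :=
      mul_le_mul_of_nonneg_left hloglogL hrpos.le
    nlinarith [hlogL_le_4r, hr1]
  -- first term bound
  have h2N : (0 : ℝ) < 2 * (N : ℝ) := by linarith
  have heb : (0 : ℝ) < Real.exp 1 * b := mul_pos (Real.exp_pos 1) hb
  set T : ℝ := δ * (N : ℝ) ^ 2 * (2 * (N : ℝ)) ^ (N + 1) / (Real.exp 1 * b) ^ N with hTdef
  have hnum : (0:ℝ) < δ * (N : ℝ) ^ 2 * (2 * (N : ℝ)) ^ (N + 1) :=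
    mul_pos (mul_pos hδ (pow_pos hNpos 2)) (pow_pos h2N _)
  have hTpos : 0 < T := div_pos hnum (pow_pos heb _)
  have hlogδ : Real.log δ = -L := by
    rw [hLdef, one_div, Real.log_inv]; ring
  have hlogT : Real.log T ≤ -(γ' * N) := by
    rw [hTdef, Real.log_div (ne_of_gt hnum) (ne_of_gt (pow_pos heb N)),
      Real.log_mul (ne_of_gt (mul_pos hδ (pow_pos hNpos 2))) (ne_of_gt (pow_pos h2N _)),
      Real.log_mul (ne_of_gt hδ) (ne_of_gt (pow_pos hNpos 2)),
      Real.log_pow, Real.log_pow, Real.log_pow,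
      Real.log_mul (by norm_num) (ne_of_gt hNpos),
      Real.log_mul (Real.exp_ne_zero 1) (ne_of_gt hb),
      Real.log_exp, hlogδ]
    have hNA : (N : ℝ) * (Real.log 2 + γ' - 1 - Real.log b) ≤ (N : ℝ) * A :=
      mul_le_mul_of_nonneg_left (le_max_left _ _) hNpos.le
    push_cast
    have e1 : ((N:ℝ) + 1) * (Real.log 2 + Real.log (N:ℝ)) =
        (N:ℝ) * Real.log 2 + (N:ℝ) * Real.log (N:ℝ) + Real.log 2 + Real.log (N:ℝ) := by ring
    have e2 : (N:ℝ) * (Real.log 2 + γ' - 1 - Real.log b) =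
        (N:ℝ) * Real.log 2 + (N:ℝ) * γ' - (N:ℝ) - (N:ℝ) * Real.log b := by ring
    have e3 : (N:ℝ) * (1 + Real.log b) = (N:ℝ) + (N:ℝ) * Real.log b := by ring
    linarith [key, hNA]
  have hT : T ≤ Real.exp (-(γ' * N)) := by
    calc T = Real.exp (Real.log T) := (Real.exp_log hTpos).symm
      _ ≤ Real.exp (-(γ' * N)) := Real.exp_le_exp.mpr hlogT
  -- second term bound
  have hs0 : 0 < a / b := div_pos ha hb
  have hs1 : a / b < 1 := (div_lt_one hb).mpr hab
  have hlogs : Real.log (a / b) = -Real.log (b / a) := by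
    rw [Real.log_div (ne_of_gt ha) (ne_of_gt hb), Real.log_div (ne_of_gt hb) (ne_of_gt ha)]
    ring
  have hS : (a / b) ^ (N + 1) ≤ Real.exp (-(γ' * N)) := by
    have h1 : (a / b) ^ (N + 1) ≤ (a / b) ^ N :=
      pow_le_pow_of_le_one hs0.le hs1.le (Nat.le_succ N)
    have h2 : (a / b) ^ N = Real.exp ((N : ℝ) * Real.log (a / b)) := by
      rw [Real.exp_nat_mul, Real.exp_log hs0]
    have h3 : (N : ℝ) * Real.log (a / b) ≤ -(γ' * N) := by
      rw [hlogs]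
      have : γ' * N ≤ Real.log (b / a) * N :=
        mul_le_mul_of_nonneg_right hγ'le hNpos.le
      nlinarith
    calc (a / b) ^ (N + 1) ≤ (a / b) ^ N := h1
      _ = Real.exp ((N : ℝ) * Real.log (a / b)) := h2
      _ ≤ Real.exp (-(γ' * N)) := Real.exp_le_exp.mpr h3
  have main : T + (a / b) ^ (N + 1) ≤ 2 * Real.exp (-γ' * N) := by
    rw [neg_mul]
    linarith
  constructor
  · exact main
  · intro hle
    have : γ' = Real.log (b / a) := min_eq_right hle
    rw [← this]
    exact main
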